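/- Let n, m ≥ 1 and let f : ℤ/nℤ → ℤ/mℤ have the (unique) expansion f(x) = Σ_{k=0}^{n−1} a_k · C(x, k) in ℤ/mℤ (x taken as its representative in {0, …, n−1}, a_k ∈ ℤ/mℤ). Then f is congruence preserving if and only if for every k = 0, …, n−1 the element lcm(k), viewed in ℤ/mℤ, divides a_k in ℤ/mℤ. -/

import Mathlib

/-- `ulcm k` is the least common multiple of `1, 2, …, k`, with `ulcm 0 = 1`. -/
def ulcm (k : ℕ) : ℕ := (Finset.Icc 1 k).lcm id

/-- `mu m` is the largest prime power dividing `m`. -/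
def mu (m : ℕ) : ℕ := m.primeFactors.sup fun p => p ^ m.factorization p

/-- `f : ZMod n → ZMod m` is congruence preserving. -/
def CongPres (n m : ℕ) (f : ZMod n → ZMod m) : Prop :=
  ∀ d : ℕ, ∀ hd : d ∣ m, ∀ a b : ℕ, a < n → b < n → a ≡ b [MOD d] →
    ZMod.castHom hd (ZMod d) (f a) = ZMod.castHom hd (ZMod d) (f b)

/-- `CP n m` is the number of congruence preserving functions `ZMod n → ZMod m`. -/
noncomputable def CP (n m : ℕ) : ℕ := Nat.card {f : ZMod n → ZMod m // CongPres n m f}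

open Finset Function

section Aux

lemma ulcm_succ (k : ℕ) : ulcm (k+1) = Nat.lcm (k+1) (ulcm k) := by
  unfold ulcm
  have : Finset.Icc 1 (k+1) = insert (k+1) (Finset.Icc 1 k) := by
    ext x; simp [Finset.mem_Icc]; omega
  rw [this, Finset.lcm_insert]
  rfl

lemma ulcm_ne_zero (k : ℕ) : ulcm k ≠ 0 := by
  induction k with
  | zero => decide
  | succ k ih => rw [ulcm_succ]; exact Nat.lcm_ne_zero (by omega) ih

lemma dvd_ulcm {t k : ℕ} (h1 : 1 ≤ t) (h2 : t ≤ k) : t ∣ ulcm k := by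
  exact Finset.dvd_lcm (f := id) (Finset.mem_Icc.mpr ⟨h1, h2⟩)

lemma pow_le_of_dvd_ulcm {p i k : ℕ} (hp : p.Prime) (hi : 1 ≤ i) (h : p^i ∣ ulcm k) :
    p^i ≤ k := by
  induction k with
  | zero =>
    exfalso
    have : p^i ∣ 1 := by simpa [ulcm] using h
    have := Nat.le_of_dvd one_pos this
    have : 2 ≤ p := hp.two_le
    have : 2 ≤ p ^ i := le_trans this (Nat.le_self_pow (by omega) p)
    omega
  | succ k ih =>
    rw [ulcm_succ] at h
    have h2 : p^i ∣ (k+1) ∨ p^i ∣ ulcm k := by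
      by_contra hc
      push_neg at hc
      have h1 := (Nat.Prime.pow_dvd_iff_le_factorization hp
        (Nat.lcm_ne_zero (by omega) (ulcm_ne_zero k))).mp h
      rw [Nat.factorization_lcm (by omega) (ulcm_ne_zero k)] at h1
      simp only [Finsupp.sup_apply] at h1
      rcases le_total ((k+1).factorization p) ((ulcm k).factorization p) with hle | hle
      · exact hc.2 ((Nat.Prime.pow_dvd_iff_le_factorization hp (ulcm_ne_zero k)).mpr
          (by rw [sup_eq_right.mpr hle] at h1; exact h1))
      · exact hc.1 ((Nat.Prime.pow_dvd_iff_le_factorization hp (by omega)).mpr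
          (by rw [sup_eq_left.mpr hle] at h1; exact h1))
    rcases h2 with h2 | h2
    · exact Nat.le_of_dvd (by omega) h2
    · exact le_trans (ih h2) (by omega)

lemma fwdDiff_iter_map {G G' : Type*} [AddCommGroup G] [AddCommGroup G']
    (φ : G →+ G') (g : ℕ → G) (k y : ℕ) :
    (fwdDiff 1)^[k] (fun x => φ (g x)) y = φ ((fwdDiff 1)^[k] g y) := by
  rw [fwdDiff_iter_eq_sum_shift, fwdDiff_iter_eq_sum_shift, map_sum]
  simp

lemma dvd_ulcm_mul_choose {c t k : ℕ} (ht1 : 1 ≤ t) (htk : t ≤ k) :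
    c ∣ ulcm k * c.choose t := by
  rcases Nat.eq_zero_or_pos c with rfl | hc
  · simp [Nat.choose_eq_zero_of_lt (by omega : (0:ℕ) < t)]
  obtain ⟨w, hw⟩ := dvd_ulcm ht1 htk
  have key : c.choose t * t = c * (c-1).choose (t-1) := by
    have := Nat.add_one_mul_choose_eq (c-1) (t-1)
    rw [Nat.sub_add_cancel hc,
      Nat.sub_add_cancel ht1] at this
    omega
  refine ⟨w * (c-1).choose (t-1), ?_⟩
  calc ulcm k * c.choose t = w * (c.choose t * t) := by rw [hw]; ring
    _ = c * (w * (c-1).choose (t-1)) := by rw [key]; ring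

lemma key_dvd (k c j : ℕ) :
    (c:ℤ) ∣ (ulcm k * (j + c).choose k : ℤ) - ulcm k * j.choose k := by
  have hvdm : (j + c).choose k = ∑ s ∈ range (k+1), j.choose s * c.choose (k - s) := by
    rw [Nat.add_choose_eq]
    exact Finset.Nat.sum_antidiagonal_eq_sum_range_succ (fun a b => j.choose a * c.choose b) k
  have h2 : (ulcm k * (j + c).choose k : ℤ) - ulcm k * j.choose k
      = ∑ s ∈ range k, (ulcm k : ℤ) * (j.choose s * c.choose (k - s)) := by
    rw [hvdm]; push_cast [Finset.sum_range_succ]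
    rw [mul_add, Finset.mul_sum]
    rw [Nat.sub_self, Nat.choose_zero_right]
    push_cast
    ring
  rw [h2]
  refine Finset.dvd_sum fun s hs => ?_
  have hs' := Finset.mem_range.mp hs
  have hnat : c ∣ ulcm k * (j.choose s * c.choose (k-s)) := by
    obtain ⟨w, hw⟩ := dvd_ulcm_mul_choose (c := c) (by omega : 1 ≤ k - s) (by omega : k - s ≤ k)
    exact ⟨j.choose s * w, by rw [show ulcm k * (j.choose s * c.choose (k-s))
      = j.choose s * (ulcm k * c.choose (k-s)) by ring, hw]; ring⟩
  have := Int.natCast_dvd_natCast.mpr hnat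
  push_cast at this
  convert this using 2

lemma key_dvd' (k i j : ℕ) :
    ((j:ℤ) - i) ∣ (ulcm k * j.choose k : ℤ) - ulcm k * i.choose k := by
  rcases le_total i j with h | h
  · obtain ⟨c, rfl⟩ := Nat.exists_eq_add_of_le h
    simpa using key_dvd k c i
  · obtain ⟨c, rfl⟩ := Nat.exists_eq_add_of_le h
    push_cast
    rw [show ((j:ℤ) - (j + c)) = -(c:ℤ) by ring, neg_dvd]
    have := key_dvd k c j
    push_cast at this
    have h4 := dvd_neg.mpr this
    rw [neg_sub] at h4
    exact h4

lemma coeff_eq {n m : ℕ} (f : ZMod n → ZMod m) (a : Fin n → ZMod m)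
    (hf : ∀ x : ZMod n, f x = ∑ k : Fin n, a k * (Nat.choose x.val k : ZMod m))
    (k : ℕ) (hk : k < n) :
    (fwdDiff 1)^[k] (fun i : ℕ => f (i : ZMod n)) 0 = a ⟨k, hk⟩ := by
  have step1 : (fwdDiff 1)^[k] (fun i : ℕ => f (i : ZMod n)) 0
      = (fwdDiff 1)^[k] (∑ j : Fin n, (a j) • fun x : ℕ => ((x.choose (j:ℕ) : ℤ) : ZMod m)) 0 := by
    rw [fwdDiff_iter_eq_sum_shift, fwdDiff_iter_eq_sum_shift]
    refine Finset.sum_congr rfl fun i hi => ?_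
    have hi' : i < n := lt_of_le_of_lt (Nat.lt_succ_iff.mp (Finset.mem_range.mp hi)) hk
    congr 1
    simp only [zero_add, smul_eq_mul, mul_one]
    rw [hf, Finset.sum_apply]
    refine Finset.sum_congr rfl fun j _ => ?_
    rw [ZMod.val_natCast_of_lt hi']
    simp [smul_eq_mul]
  rw [step1, fwdDiff_iter_finset_sum, Finset.sum_apply]
  have each : ∀ j : Fin n,
      ((fwdDiff 1)^[k] ((a j) • fun x : ℕ => ((x.choose (j:ℕ) : ℤ) : ZMod m))) 0
        = a j * (if k = (j:ℕ) then 1 else 0) := by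
    intro j
    rw [fwdDiff_iter_const_smul, Pi.smul_apply, smul_eq_mul]
    congr 1
    have h2 := fwdDiff_iter_map (Int.castAddHom (ZMod m))
      (fun x : ℕ => (x.choose (j:ℕ) : ℤ)) k 0
    simp only [Int.coe_castAddHom] at h2
    rw [h2, fwdDiff_iter_choose_zero]
    split <;> simp
  rw [Finset.sum_congr rfl fun j _ => each j]
  rw [Finset.sum_eq_single (⟨k, hk⟩ : Fin n)]
  · simp
  · intro j _ hj
    have : k ≠ (j:ℕ) := fun h => hj (by ext; simp [h.symm])
    simp [this]
  · simp

lemma core {n m : ℕ} (f : ZMod n → ZMod m)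
    (hcp : CongPres n m f) {p e : ℕ} (hp : p.Prime) (he : 1 ≤ e) (hdm : p^e ∣ m)
    {k : ℕ} (hqk : p^e ≤ k) (hk : k < n) :
    ZMod.castHom hdm (ZMod (p^e)) ((fwdDiff 1)^[k] (fun i : ℕ => f (i : ZMod n)) 0) = 0 := by
  haveI : NeZero (p^e) := ⟨pow_ne_zero e hp.pos.ne'⟩
  set π := ZMod.castHom hdm (ZMod (p^e)) with hπ
  set G : ℕ → ZMod (p^e) := fun i => π (f (i : ZMod n)) with hG
  have h1 : π ((fwdDiff 1)^[k] (fun i : ℕ => f (i : ZMod n)) 0) = (fwdDiff 1)^[k] G 0 :=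
    (fwdDiff_iter_map π.toAddMonoidHom (fun i : ℕ => f (i : ZMod n)) k 0).symm
  rw [h1]
  conv_lhs => rw [show k = (k - p^e) + p^e from (Nat.sub_add_cancel hqk).symm]
  rw [Function.iterate_add_apply, fwdDiff_iter_eq_sum_shift]
  refine Finset.sum_eq_zero fun s hs => ?_
  have hs' : s ≤ k - p^e := Nat.lt_succ_iff.mp (Finset.mem_range.mp hs)
  have hH : (fwdDiff 1)^[p^e] G (0 + s • 1) = 0 := by
    simp only [zero_add, smul_eq_mul, mul_one]
    rw [fwdDiff_iter_eq_sum_shift]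
    have hzero : ∑ t ∈ range (p^e+1), ((-1:ℤ)^(p^e - t) * (p^e).choose t) = 0 := by
      have hrefl := Finset.sum_range_reflect (fun t => ((-1:ℤ)^t * (p^e).choose t)) (p^e + 1)
      simp only [Nat.add_sub_cancel] at hrefl
      rw [Int.alternating_sum_range_choose_of_ne (pow_ne_zero e hp.pos.ne')] at hrefl
      rw [← hrefl]
      refine Finset.sum_congr rfl fun t ht => ?_
      have ht' : t ≤ p^e := Nat.lt_succ_iff.mp (Finset.mem_range.mp ht)
      rw [Nat.choose_symm ht']
    have hsplit : ∀ t ∈ range (p^e + 1),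
        ((-1:ℤ)^(p^e - t) * (p^e).choose t) • G (s + t • 1)
          = ((-1:ℤ)^(p^e - t) * (p^e).choose t) • (G (s + t) - G s)
            + ((-1:ℤ)^(p^e - t) * (p^e).choose t) • G s := by
      intro t ht
      rw [smul_sub, smul_eq_mul, mul_one]
      abel
    rw [Finset.sum_congr rfl hsplit, Finset.sum_add_distrib, ← Finset.sum_smul, hzero,
      zero_smul, add_zero]
    refine Finset.sum_eq_zero fun t ht => ?_
    have ht' : t ≤ p^e := Nat.lt_succ_iff.mp (Finset.mem_range.mp ht)
    rcases Nat.eq_zero_or_pos t with rfl | ht1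
    · simp
    have main : ((p^e).choose t : ZMod (p^e)) * (G (s+t) - G s) = 0 := by
      set c := min (t.factorization p) e with hc
      have hcle : c ≤ e := min_le_right _ _
      have hct : p^c ∣ t := dvd_trans (pow_dvd_pow p (min_le_left _ _)) (Nat.ordProj_dvd t p)
      have hcm : p^c ∣ m := dvd_trans (pow_dvd_pow p hcle) hdm
      have hce : p^c ∣ p^e := pow_dvd_pow p hcle
      have hmod : (s + t) ≡ s [MOD p^c] :=
        ((Nat.modEq_iff_dvd' (Nat.le_add_right s t)).mpr (by simpa using hct)).symm
      have hfe := hcp (p^c) hcm (s+t) s (by omega) (by omega) hmod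
      have hcomp : ∀ z : ZMod m, ZMod.castHom hcm (ZMod (p^c)) z
          = ZMod.castHom hce (ZMod (p^c)) (π z) := by
        intro z
        rw [hπ, ← RingHom.comp_apply, ZMod.castHom_comp]
      have hx : ZMod.castHom hce (ZMod (p^c)) (G (s+t) - G s) = 0 := by
        rw [map_sub, hG]
        simp only
        rw [← hcomp, ← hcomp, hfe, sub_self]
      set x := G (s+t) - G s with hxdef
      have hval : p^c ∣ x.val := by
        refine (ZMod.natCast_eq_zero_iff _ _).mp ?_
        rw [ZMod.natCast_val, ← ZMod.castHom_apply (h := hce), hx]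
      have hxx : x = ((p^c * (x.val / p^c) : ℕ) : ZMod (p^e)) := by
        rw [Nat.mul_div_cancel' hval, ZMod.natCast_val, ZMod.cast_id]
      have hchoose : p^(e - c) ∣ (p^e).choose t := by
        rcases eq_or_lt_of_le hcle with heq | hlt
        · rw [heq]; simp
        · have hca : c = t.factorization p := by
            rcases le_total (t.factorization p) e with h' | h'
            · rw [hc, min_eq_left h']
            · exfalso; rw [hc, min_eq_right h'] at hlt; omega
          have hqkey : (p^e) * ((p^e - 1).choose (t-1)) = (p^e).choose t * t := by
            have := Nat.add_one_mul_choose_eq (p^e - 1) (t-1)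
            have hq1 : 1 ≤ p^e := Nat.one_le_pow _ _ hp.pos
            rw [Nat.sub_add_cancel hq1,
              Nat.sub_add_cancel ht1] at this
            omega
          have hdvd1 : p^c * p^(e-c) ∣ (p^e).choose t * t := by
            rw [← pow_add, Nat.add_sub_cancel' hcle]
            exact ⟨(p^e - 1).choose (t-1), hqkey.symm⟩
          have ht0 : t ≠ 0 := by omega
          have htu : t = p^c * (t / p^c) := (Nat.mul_div_cancel' hct).symm
          have hpu : ¬ p ∣ (t / p^c) := by
            rw [hca]
            exact Nat.not_dvd_ordCompl hp ht0
          have h6 : p^c * p^(e-c) ∣ p^c * ((p^e).choose t * (t / p^c)) := by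
            calc p^c * p^(e-c) ∣ (p^e).choose t * t := hdvd1
              _ = p^c * ((p^e).choose t * (t / p^c)) := by
                  rw [show p^c * ((p^e).choose t * (t/p^c)) = (p^e).choose t * (p^c * (t/p^c)) by ring,
                    Nat.mul_div_cancel' hct]
          have h5 : p^(e-c) ∣ (p^e).choose t * (t / p^c) :=
            (mul_dvd_mul_iff_left (pow_ne_zero c hp.pos.ne' : (p^c:ℕ) ≠ 0)).mp h6
          have cop : Nat.Coprime (p^(e-c)) (t / p^c) :=
            Nat.Coprime.pow_left _ ((Nat.Prime.coprime_iff_not_dvd hp).mpr hpu)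
          exact cop.dvd_of_dvd_mul_right h5
      obtain ⟨w, hw⟩ := hchoose
      rw [hxx, ← Nat.cast_mul, ZMod.natCast_eq_zero_iff]
      refine ⟨w * (x.val / p^c), ?_⟩
      rw [hw]
      calc p^(e-c) * w * (p^c * (x.val / p^c)) = (p^(e-c) * p^c) * (w * (x.val / p^c)) := by ring
        _ = p^e * (w * (x.val / p^c)) := by rw [← pow_add, Nat.sub_add_cancel hcle]
    rw [zsmul_eq_mul]
    push_cast
    rw [mul_assoc, main, mul_zero]
  rw [hH, smul_zero]

end Aux

theorem stmt_6 (n m : ℕ) (hn : 1 ≤ n) (hm : 1 ≤ m) (f : ZMod n → ZMod m)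
    (a : Fin n → ZMod m)
    (hf : ∀ x : ZMod n, f x = ∑ k : Fin n, a k * (Nat.choose x.val k : ZMod m)) :
    CongPres n m f ↔ ∀ k : Fin n, (ulcm k : ZMod m) ∣ a k := by
  haveI : NeZero m := ⟨by omega⟩
  constructor
  · intro hcp k
    have hA : (fwdDiff 1)^[(k:ℕ)] (fun i : ℕ => f (i : ZMod n)) 0 = a k := by
      rw [coeff_eq f a hf (k:ℕ) k.isLt]
    set g := Nat.gcd (ulcm (k:ℕ)) m with hg
    have hgval : g ∣ (a k).val := by
      rw [Nat.dvd_iff_prime_pow_dvd_dvd]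
      intro p i hp hpg
      rcases Nat.eq_zero_or_pos i with rfl | hi
      · simp
      have hpm : p^i ∣ m := hpg.trans (Nat.gcd_dvd_right _ _)
      have hpl : p^i ∣ ulcm (k:ℕ) := hpg.trans (Nat.gcd_dvd_left _ _)
      have hle : p^i ≤ (k:ℕ) := pow_le_of_dvd_ulcm hp hi hpl
      have hker := core f hcp hp hi hpm hle k.isLt
      rw [hA] at hker
      refine (ZMod.natCast_eq_zero_iff _ _).mp ?_
      rw [ZMod.natCast_val, ← ZMod.castHom_apply (h := hpm), hker]
    have h2 : ((g:ℕ) : ZMod m) ∣ a k := by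
      refine ⟨(((a k).val / g : ℕ) : ZMod m), ?_⟩
      rw [← Nat.cast_mul, Nat.mul_div_cancel' hgval, ZMod.natCast_val, ZMod.cast_id]
    have h3 : (ulcm (k:ℕ) : ZMod m) ∣ ((g:ℕ) : ZMod m) := by
      refine ⟨((Nat.gcdA (ulcm (k:ℕ)) m : ℤ) : ZMod m), ?_⟩
      have hb := Nat.gcd_eq_gcd_ab (ulcm (k:ℕ)) m
      calc ((g:ℕ) : ZMod m) = (((g:ℕ) : ℤ) : ZMod m) := by push_cast; rfl
        _ = ((ulcm (k:ℕ) * Nat.gcdA (ulcm (k:ℕ)) m + m * Nat.gcdB (ulcm (k:ℕ)) m : ℤ) : ZMod m) := by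
            rw [hg, ← hb]
        _ = (ulcm (k:ℕ) : ZMod m) * ((Nat.gcdA (ulcm (k:ℕ)) m : ℤ) : ZMod m) := by
            push_cast [ZMod.natCast_self]
            ring
    exact h3.trans h2
  · intro hdvd d hd i j hi hj hij
    have e1 : ∀ (i : ℕ), i < n → ZMod.castHom hd (ZMod d) (f (i : ZMod n))
        = ∑ k : Fin n, ZMod.castHom hd (ZMod d) (a k) * ((i.choose (k:ℕ) : ℕ) : ZMod d) := by
      intro i hi
      rw [hf, map_sum]
      refine Finset.sum_congr rfl fun k _ => ?_
      rw [map_mul, map_natCast, ZMod.val_natCast_of_lt hi]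
    rw [e1 i hi, e1 j hj]
    refine Finset.sum_congr rfl fun k _ => ?_
    obtain ⟨t, ht⟩ := hdvd k
    have key : ((ulcm (k:ℕ) * i.choose (k:ℕ) : ℕ) : ZMod d)
        = ((ulcm (k:ℕ) * j.choose (k:ℕ) : ℕ) : ZMod d) := by
      rw [ZMod.natCast_eq_natCast_iff, Nat.modEq_iff_dvd]
      have hdij : (d:ℤ) ∣ (j:ℤ) - i := Nat.modEq_iff_dvd.mp hij
      push_cast
      exact dvd_trans hdij (key_dvd' (k:ℕ) i j)
    rw [ht, map_mul, map_natCast]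
    calc (ulcm (k:ℕ) : ZMod d) * ZMod.castHom hd (ZMod d) t * ((i.choose (k:ℕ) : ℕ) : ZMod d)
        = ZMod.castHom hd (ZMod d) t * ((ulcm (k:ℕ) * i.choose (k:ℕ) : ℕ) : ZMod d) := by
          push_cast; ring
      _ = ZMod.castHom hd (ZMod d) t * ((ulcm (k:ℕ) * j.choose (k:ℕ) : ℕ) : ZMod d) := by
          rw [key]
      _ = (ulcm (k:ℕ) : ZMod d) * ZMod.castHom hd (ZMod d) t * ((j.choose (k:ℕ) : ℕ) : ZMod d) := by
          push_cast; ring
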